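/- Let F = ℂ(x,t) be the field of rational functions in two variables x, t over ℂ, let D = 4t²x² + 4t² − x ∈ F, and let P₁ be the 3×3 matrix over F with rows (x³/(2D), −t·x²·(x²+1)/D, x/(2D)), (t·x³/D, −x³/(2D), t·x/D), and (0, −1/(2t), 0). Then the row vector v = (−2·x⁻², x⁻²·t⁻¹, 1) satisfies v·P₁ = 0; consequently det P₁ = 0, i.e. P₁ does not have full rank. -/

import Mathlib

open Matrix MvPolynomial

noncomputable section

/-- The field `ℂ(x,t)` of rational functions in two variables over `ℂ`. -/
abbrev RatField : Type := FractionRing (MvPolynomial (Fin 2) ℂ)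

/-- The variable `x` in `ℂ(x,t)`. -/
noncomputable def xv : RatField := algebraMap (MvPolynomial (Fin 2) ℂ) RatField (X 0)

/-- The variable `t` in `ℂ(x,t)`. -/
noncomputable def tv : RatField := algebraMap (MvPolynomial (Fin 2) ℂ) RatField (X 1)

/-- `D = 4t²x² + 4t² − x`. -/
noncomputable def Dv : RatField := 4 * tv ^ 2 * xv ^ 2 + 4 * tv ^ 2 - xv

/-- The square-root part `P₁` of the `3×3` matrix cRBVP for the three-quadrant walk
with steps `{(1,1), (−1,1), (0,−1)}`. -/
noncomputable def P1mat : Matrix (Fin 3) (Fin 3) RatField :=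
  !![xv ^ 3 / (2 * Dv), -(tv * xv ^ 2 * (xv ^ 2 + 1)) / Dv, xv / (2 * Dv);
     tv * xv ^ 3 / Dv, -(xv ^ 3) / (2 * Dv), tv * xv / Dv;
     0, -(1 / (2 * tv)), 0]

lemma alg_inj : Function.Injective (algebraMap (MvPolynomial (Fin 2) ℂ) RatField) :=
  IsFractionRing.injective _ _

lemma xv_ne : xv ≠ 0 := by
  simp only [xv]
  intro h
  have := alg_inj (h.trans (map_zero _).symm)
  exact MvPolynomial.X_ne_zero 0 this

lemma tv_ne : tv ≠ 0 := by
  simp only [tv]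
  intro h
  have := alg_inj (h.trans (map_zero _).symm)
  exact MvPolynomial.X_ne_zero 1 this

lemma two_ne : (2 : RatField) ≠ 0 := by
  intro h
  have h2 : algebraMap (MvPolynomial (Fin 2) ℂ) RatField 2 = 0 := by
    rw [map_ofNat]; exact h
  have := alg_inj (h2.trans (map_zero _).symm)
  norm_num at this

lemma Dv_ne : Dv ≠ 0 := by
  have : Dv = algebraMap (MvPolynomial (Fin 2) ℂ) RatField
      (4 * X 1 ^ 2 * X 0 ^ 2 + 4 * X 1 ^ 2 - X 0) := by
    simp [Dv, xv, tv, map_add, map_sub, _root_.map_mul, map_pow, map_ofNat]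
  rw [this]
  intro h
  have hp := alg_inj (h.trans (map_zero _).symm)
  have := congrArg (MvPolynomial.eval (fun i => if i = 0 then (1 : ℂ) else 0)) hp
  simp at this

lemma key {K : Type*} [Field K] (x t D : K) (hx : x ≠ 0) (ht : t ≠ 0)
    (h2 : (2 : K) ≠ 0) (hD : D ≠ 0) (hDdef : D = 4 * t ^ 2 * x ^ 2 + 4 * t ^ 2 - x) :
    (![-2 * (x ^ 2)⁻¹, (x ^ 2)⁻¹ * t⁻¹, 1] ᵥ*
      (!![x ^ 3 / (2 * D), -(t * x ^ 2 * (x ^ 2 + 1)) / D, x / (2 * D);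
         t * x ^ 3 / D, -(x ^ 3) / (2 * D), t * x / D;
         0, -(1 / (2 * t)), 0] : Matrix (Fin 3) (Fin 3) K) = 0) ∧
    (!![x ^ 3 / (2 * D), -(t * x ^ 2 * (x ^ 2 + 1)) / D, x / (2 * D);
         t * x ^ 3 / D, -(x ^ 3) / (2 * D), t * x / D;
         0, -(1 / (2 * t)), 0] : Matrix (Fin 3) (Fin 3) K).det = 0 := by
  constructor
  · funext j
    fin_cases j
    · simp [vecMul, dotProduct, Fin.sum_univ_three]
      field_simp
      rw [hDdef]; ring
    · simp [vecMul, dotProduct, Fin.sum_univ_three]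
      field_simp
      rw [hDdef]
      ring
    · simp [vecMul, dotProduct, Fin.sum_univ_three]
      field_simp
      rw [hDdef]; ring
  · rw [det_fin_three]
    simp only [of_apply, cons_val', cons_val_zero, cons_val_one, cons_val_two, empty_val', cons_val_fin_one, head_cons, tail_cons, vecHead]
    field_simp
    ring

theorem stmt_15 :
    (![-2 * (xv ^ 2)⁻¹, (xv ^ 2)⁻¹ * tv⁻¹, 1] ᵥ* P1mat = 0) ∧ P1mat.det = 0 := by
  have h := key xv tv Dv xv_ne tv_ne two_ne Dv_ne rfl
  rw [P1mat]
  exact h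

end
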